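/- Given a μ-free term t over nonterminals X, a set Z ⊆ X of variables, and an assignment φ : X → guarded μ-expressions, there exists a Z-pseudoclosure t' of t with respect to φ, i.e., a term obtainable from t by a chain of single syntactic substitutions whose free variables all lie in Z. -/

import Mathlib

/-- μ-expressions over constants `K` and alphabet `A`, with variables named by
natural numbers: `t ::= k̄ | x | ā | t + t | t × t | μx.g`. -/
inductive Mu (K A : Type) : Type
  | const (k : K) : Mu K A
  | var (n : ℕ) : Mu K A
  | ltr (a : A) : Mu K A
  | add (s t : Mu K A) : Mu K A
  | mul (s t : Mu K A) : Mu K A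
  | mu (n : ℕ) (g : Mu K A) : Mu K A

namespace Mu

/-- Substitution `t[s/x]` of a term `s` for all free occurrences of variable `n`. -/
def subst {K A : Type} : Mu K A → ℕ → Mu K A → Mu K A
  | const k, _, _ => const k
  | ltr a, _, _ => ltr a
  | var m, n, s => if m = n then s else var m
  | add u v, n, s => add (u.subst n s) (v.subst n s)
  | mul u v, n, s => mul (u.subst n s) (v.subst n s)
  | mu m g, n, s => if m = n then mu m g else mu m (g.subst n s)

/-- Guarded terms `g ::= ā × t | k̄ | g + g`. -/
inductive Guarded {K A : Type} : Mu K A → Prop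
  | const (k : K) : Guarded (const k)
  | mul (a : A) (t : Mu K A) : Guarded (mul (ltr a) t)
  | add {g₁ g₂ : Mu K A} : Guarded g₁ → Guarded g₂ → Guarded (add g₁ g₂)

/-- Free variables of a μ-expression. -/
def fv {K A : Type} : Mu K A → Set ℕ
  | const _ => ∅
  | ltr _ => ∅
  | var n => {n}
  | add u v => u.fv ∪ v.fv
  | mul u v => u.fv ∪ v.fv
  | mu n g => g.fv \ {n}

/-- A μ-expression is closed if it has no free variables. -/
def Closed {K A : Type} (t : Mu K A) : Prop := t.fv = ∅

/-- μ-free terms (elements of the term algebra `T_K(X)`). -/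
def MuFree {K A : Type} : Mu K A → Prop
  | const _ => True
  | ltr _ => True
  | var _ => True
  | add u v => u.MuFree ∧ v.MuFree
  | mul u v => u.MuFree ∧ v.MuFree
  | mu _ _ => False

end Mu

/-- A bisimulation between `K × (−)^A`-coalgebras. -/
def IsBisim {α β A K : Type} (o₁ : α → K) (d₁ : α → A → α)
    (o₂ : β → K) (d₂ : β → A → β) (R : α → β → Prop) : Prop :=
  ∀ x y, R x y → o₁ x = o₂ y ∧ ∀ a, R (d₁ x a) (d₂ y a)

/-- Bisimilarity: the union of all bisimulations. -/
def Bisimilar {α β A K : Type} (o₁ : α → K) (d₁ : α → A → α)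
    (o₂ : β → K) (d₂ : β → A → β) (x : α) (y : β) : Prop :=
  ∃ R, IsBisim o₁ d₁ o₂ d₂ R ∧ R x y

/-- A single syntactic substitution (w.r.t. an assignment `φ` of guarded
μ-expressions to variables): one occurrence of the variable `x` (free or
bound) is replaced by `μx.φ(x)`. -/
inductive SingleSub {K A : Type} (φ : ℕ → Mu K A) : Mu K A → Mu K A → Prop
  | var (n : ℕ) : SingleSub φ (.var n) (.mu n (φ n))
  | addl {s s' : Mu K A} (u : Mu K A) :
      SingleSub φ s s' → SingleSub φ (.add s u) (.add s' u)
  | addr {s s' : Mu K A} (u : Mu K A) :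
      SingleSub φ s s' → SingleSub φ (.add u s) (.add u s')
  | mull {s s' : Mu K A} (u : Mu K A) :
      SingleSub φ s s' → SingleSub φ (.mul s u) (.mul s' u)
  | mulr {s s' : Mu K A} (u : Mu K A) :
      SingleSub φ s s' → SingleSub φ (.mul u s) (.mul u s')
  | mu {u u' : Mu K A} (n : ℕ) :
      SingleSub φ u u' → SingleSub φ (.mu n u) (.mu n u')

/-- `t'` is obtainable from `t` by a chain of single syntactic substitutions. -/
def Chain {K A : Type} (φ : ℕ → Mu K A) : Mu K A → Mu K A → Prop :=
  Relation.ReflTransGen (SingleSub φ)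


section Aux
variable {K A : Type} {φ : ℕ → Mu K A}

lemma chain_mu {u u' : Mu K A} (n : ℕ) (h : Chain φ u u') :
    Chain φ (.mu n u) (.mu n u') :=
  Relation.ReflTransGen.lift (Mu.mu n) (fun _ _ hs => SingleSub.mu n hs) _ _ h

lemma chain_add {s s' u u' : Mu K A} (h1 : Chain φ s s') (h2 : Chain φ u u') :
    Chain φ (.add s u) (.add s' u') := by
  have h1' : Chain φ (.add s u) (.add s' u) :=
    Relation.ReflTransGen.lift (fun x => Mu.add x u)
      (fun _ _ hs => SingleSub.addl u hs) _ _ h1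
  have h2' : Chain φ (.add s' u) (.add s' u') :=
    Relation.ReflTransGen.lift (fun x => Mu.add s' x)
      (fun _ _ hs => SingleSub.addr s' hs) _ _ h2
  exact h1'.trans h2' 

lemma chain_mul {s s' u u' : Mu K A} (h1 : Chain φ s s') (h2 : Chain φ u u') :
    Chain φ (.mul s u) (.mul s' u') := by
  have h1' : Chain φ (.mul s u) (.mul s' u) :=
    Relation.ReflTransGen.lift (fun x => Mu.mul x u)
      (fun _ _ hs => SingleSub.mull u hs) _ _ h1
  have h2' : Chain φ (.mul s' u) (.mul s' u') :=
    Relation.ReflTransGen.lift (fun x => Mu.mul s' x)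
      (fun _ _ hs => SingleSub.mulr s' hs) _ _ h2
  exact h1'.trans h2' 

lemma key (φ : ℕ → Mu K A) :
    ∀ k : ℕ, ∀ t : Mu K A, ∀ V Z : Finset ℕ, (V \ Z).card = k → Z ⊆ V →
      (∀ n ∈ V, n ∉ Z → (φ n).fv ⊆ ↑V) → t.fv ⊆ ↑V →
      ∃ t', Chain φ t t' ∧ t'.fv ⊆ ↑Z := by
  intro k
  induction k using Nat.strong_induction_on with
  | _ k IHk =>
  intro t
  induction t with
  | const c =>
    intro V Z _ _ _ _
    exact ⟨.const c, Relation.ReflTransGen.refl, by simp [Mu.fv]⟩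
  | ltr a =>
    intro V Z _ _ _ _
    exact ⟨.ltr a, Relation.ReflTransGen.refl, by simp [Mu.fv]⟩
  | var n =>
    intro V Z hk hZV hfv ht
    by_cases hnZ : n ∈ Z
    · exact ⟨.var n, Relation.ReflTransGen.refl, by simp [Mu.fv, hnZ]⟩
    · have hnV : n ∈ V := by
        have h : n ∈ (Mu.var n : Mu K A).fv := by simp [Mu.fv]
        exact_mod_cast ht h
      have hkey : V \ insert n Z = (V \ Z).erase n := by
        ext m; simp only [Finset.mem_sdiff, Finset.mem_insert, Finset.mem_erase]
        tauto
      have hlt : (V \ insert n Z).card < k := by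
        rw [hkey, ← hk]
        exact Finset.card_erase_lt_of_mem (Finset.mem_sdiff.2 ⟨hnV, hnZ⟩)
      obtain ⟨g', hc, hg'⟩ := IHk _ hlt (φ n) V (insert n Z) rfl
        (Finset.insert_subset hnV hZV)
        (fun m hm hmZ => hfv m hm (fun h => hmZ (Finset.mem_insert_of_mem h)))
        (hfv n hnV hnZ)
      refine ⟨.mu n g', ?_, ?_⟩
      · exact Relation.ReflTransGen.head (SingleSub.var n) (chain_mu n hc)
      · intro m hm
        simp only [Mu.fv, Set.mem_diff, Set.mem_singleton_iff] at hm
        have := hg' hm.1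
        simp only [Finset.coe_insert, Set.mem_insert_iff] at this
        rcases this with h | h
        · exact absurd h hm.2
        · exact h
  | add s u ihs ihu =>
    intro V Z hk hZV hfv ht
    obtain ⟨s', hcs, hs'⟩ := ihs V Z hk hZV hfv
      (fun m hm => ht (Set.mem_union_left _ hm))
    obtain ⟨u', hcu, hu'⟩ := ihu V Z hk hZV hfv
      (fun m hm => ht (Set.mem_union_right _ hm))
    exact ⟨.add s' u', chain_add hcs hcu, Set.union_subset hs' hu'⟩
  | mul s u ihs ihu =>
    intro V Z hk hZV hfv ht
    obtain ⟨s', hcs, hs'⟩ := ihs V Z hk hZV hfv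
      (fun m hm => ht (Set.mem_union_left _ hm))
    obtain ⟨u', hcu, hu'⟩ := ihu V Z hk hZV hfv
      (fun m hm => ht (Set.mem_union_right _ hm))
    exact ⟨.mul s' u', chain_mul hcs hcu, Set.union_subset hs' hu'⟩
  | mu m g ihg =>
    intro V Z hk hZV hfv ht
    have hgfv : g.fv ⊆ ↑(insert m V) := by
      intro x hx
      by_cases hxm : x = m
      · simp [hxm]
      · have : x ∈ (Mu.mu m g).fv := by
          simp [Mu.fv, hx, hxm]
        have := ht this
        simp [this]
    by_cases hcase : m ∈ V ∧ m ∉ Z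
    · -- use IHk with Z' = insert m Z
      have hkey : V \ insert m Z = (V \ Z).erase m := by
        ext x; simp only [Finset.mem_sdiff, Finset.mem_insert, Finset.mem_erase]
        tauto
      have hlt : (V \ insert m Z).card < k := by
        rw [hkey, ← hk]
        exact Finset.card_erase_lt_of_mem (Finset.mem_sdiff.2 hcase)
      have hgV : g.fv ⊆ ↑V := by
        have : (insert m V : Finset ℕ) = V := Finset.insert_eq_self.2 hcase.1
        rwa [this] at hgfv
      obtain ⟨g', hc, hg'⟩ := IHk _ hlt g V (insert m Z) rfl
        (Finset.insert_subset hcase.1 hZV)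
        (fun x hx hxZ => hfv x hx (fun h => hxZ (Finset.mem_insert_of_mem h)))
        hgV
      refine ⟨.mu m g', chain_mu m hc, ?_⟩
      intro x hx
      simp only [Mu.fv, Set.mem_diff, Set.mem_singleton_iff] at hx
      have := hg' hx.1
      simp only [Finset.coe_insert, Set.mem_insert_iff] at this
      rcases this with h | h
      · exact absurd h hx.2
      · exact h
    · -- m ∈ Z or m ∉ V : same card, use structural IH with V' Z'
      have hcard : (insert m V \ insert m Z).card = k := by
        rw [← hk]; congr 1
        ext x; simp only [Finset.mem_sdiff, Finset.mem_insert]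
        constructor
        · rintro ⟨hx, hx2⟩
          rcases hx with rfl | hx
          · exact absurd (Or.inl rfl) hx2
          · exact ⟨hx, fun h => hx2 (Or.inr h)⟩
        · rintro ⟨hx, hx2⟩
          refine ⟨Or.inr hx, ?_⟩
          rintro (rfl | h)
          · push_neg at hcase
            exact hx2 (hcase hx)
          · exact hx2 h
      obtain ⟨g', hc, hg'⟩ := ihg (insert m V) (insert m Z) hcard
        (Finset.insert_subset_insert _ hZV)
        (fun x hx hxZ => by
          have hxm : x ≠ m := fun h => hxZ (by rw [h]; exact Finset.mem_insert_self m _)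
          have hxV : x ∈ V := by
            rcases Finset.mem_insert.1 hx with h | h
            · exact absurd h hxm
            · exact h
          have hxZ' : x ∉ Z := fun h => hxZ (Finset.mem_insert_of_mem h)
          exact (hfv x hxV hxZ').trans (by simp [Finset.coe_insert, Set.subset_insert]))
        hgfv
      refine ⟨.mu m g', chain_mu m hc, ?_⟩
      intro x hx
      simp only [Mu.fv, Set.mem_diff, Set.mem_singleton_iff] at hx
      have := hg' hx.1
      simp only [Finset.coe_insert, Set.mem_insert_iff] at this
      rcases this with h | h
      · exact absurd h hx.2
      · exact h

end Aux

/-- Given a μ-free term `t` over a finite set `V` of nonterminals, a set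
`Z ⊆ V` of variables, and an assignment `φ` of guarded μ-expressions (over `V`)
to the variables, there exists a `Z`-pseudoclosure of `t`: a term obtainable
from `t` by a chain of single syntactic substitutions whose free variables all
lie in `Z`. -/
theorem pseudoclosure_exists {K A : Type} (V Z : Finset ℕ) (hZV : Z ⊆ V)
    (φ : ℕ → Mu K A)
    (hguard : ∀ n ∈ V, (φ n).Guarded)
    (hfv : ∀ n ∈ V, (φ n).fv ⊆ ↑V)
    (t : Mu K A) (hmufree : t.MuFree) (htfv : t.fv ⊆ ↑V) :
    ∃ t', Chain φ t t' ∧ t'.fv ⊆ ↑Z :=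
  key φ (V \ Z).card t V Z rfl hZV (fun n hn _ => hfv n hn) htfv
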